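/- arXiv:2404.13248 — 6 statements merged into one kernel-verified Lean document; each statement's English description precedes it below -/
import Mathlib

section
/- Define L(x) = prod_{j=1}^k x_j! / x_j^{x_j} for x = (x_1,...,x_k) a k-tuple of nonnegative integers (with the convention 0^0 = 1). Then L is Schur-concave: if y majorizes x then L(y) <= L(x). -/
open Finset

/-- Majorization for integer `k`-tuples: `y` majorizes `x` iff they have equal total
sum and, for every subset of indices, the corresponding partial sum of `x` is dominated
by the sum of `y` over some subset of the same cardinality (equivalently, the sorted
partial sums of `y` dominate those of `x`). -/
def NatMajorizes {k : ℕ} (y x : Fin k → ℕ) : Prop :=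
  (∑ j, x j = ∑ j, y j) ∧
    ∀ s : Finset (Fin k), ∃ t : Finset (Fin k), t.card = s.card ∧
      ∑ j ∈ s, x j ≤ ∑ j ∈ t, y j


noncomputable def ff (n : ℕ) : ℝ := (n.factorial : ℝ) / (n : ℝ) ^ n

noncomputable def gg (n : ℕ) : ℝ := ((n : ℝ) + 1) ^ n / (n : ℝ) ^ n

lemma pow_self_pos (n : ℕ) : (0:ℝ) < (n:ℝ) ^ n := by
  cases n with
  | zero => norm_num
  | succ m => positivity

lemma ff_pos (n : ℕ) : 0 < ff n := by
  unfold ff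
  exact div_pos (by exact_mod_cast n.factorial_pos) (pow_self_pos n)

lemma gg_pos (n : ℕ) : 0 < gg n := by
  unfold gg
  exact div_pos (by positivity) (pow_self_pos n)

lemma ff_succ (n : ℕ) : ff n = gg n * ff (n + 1) := by
  unfold ff gg
  have h1 : ((n:ℝ)) ^ n ≠ 0 := (pow_self_pos n).ne'
  have h2 : ((n:ℝ) + 1) ^ (n+1) ≠ 0 := by positivity
  rw [Nat.factorial_succ]
  push_cast
  field_simp
  ring

lemma gg_step (n : ℕ) (hn : 1 ≤ n) : gg n ≤ gg (n+1) := by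
  have hnp : (0:ℝ) < (n:ℝ) := by exact_mod_cast hn
  have h := one_add_mul_le_pow (a := -(1/((n:ℝ)+1)^2)) (by
    have : (0:ℝ) < ((n:ℝ)+1)^2 := by positivity
    rw [neg_le, neg_neg, div_le_iff₀ this]
    nlinarith) (n+1)
  rw [Nat.cast_add, Nat.cast_one] at h
  have e1 : (1:ℝ) + -(1/((n:ℝ)+1)^2) = ((n:ℝ) * ((n:ℝ)+2)) / ((n:ℝ)+1)^2 := by
    field_simp; ring
  have e2 : (1:ℝ) + ((n:ℝ)+1) * (-(1/((n:ℝ)+1)^2)) = (n:ℝ) / ((n:ℝ)+1) := by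
    field_simp; ring
  rw [e1, e2, div_pow] at h
  have hden : (0:ℝ) < (((n:ℝ)+1)^2)^(n+1) := by positivity
  rw [div_le_div_iff₀ (by positivity) hden] at h
  -- h : n * ((n+1)^2)^(n+1) ≤ (n*(n+2))^(n+1) * (n+1)
  have hq : ((n:ℝ)+1)^(2*n+1) ≤ (n:ℝ)^n * ((n:ℝ)+2)^(n+1) := by
    have h3 : (0:ℝ) < (n:ℝ) * ((n:ℝ)+1) := by positivity
    rw [← mul_le_mul_iff_of_pos_right h3]
    calc ((n:ℝ)+1)^(2*n+1) * ((n:ℝ)*((n:ℝ)+1)) = (n:ℝ) * ((((n:ℝ)+1)^2)^(n+1)) := by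
          rw [← pow_mul]
          ring_nf
      _ ≤ ((n:ℝ)*((n:ℝ)+2))^(n+1) * ((n:ℝ)+1) := h
      _ = ((n:ℝ)^(n+1) * ((n:ℝ)+2)^(n+1)) * ((n:ℝ)+1) := by rw [mul_pow]
      _ = (n:ℝ)^n * ((n:ℝ)+2)^(n+1) * ((n:ℝ)*((n:ℝ)+1)) := by ring
  unfold gg
  push_cast
  rw [div_le_div_iff₀ (pow_self_pos n) (by positivity)]
  calc ((n:ℝ)+1)^n * ((n:ℝ)+1)^(n+1) = ((n:ℝ)+1)^(2*n+1) := by rw [← pow_add]; ring_nf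
    _ ≤ (n:ℝ)^n * ((n:ℝ)+2)^(n+1) := hq
    _ = ((n:ℝ)+1+1)^(n+1) * (n:ℝ)^n := by ring

lemma gg_mono : Monotone gg := by
  apply monotone_nat_of_le_succ
  intro n
  cases n with
  | zero => unfold gg; norm_num
  | succ m => exact gg_step (m+1) (by omega)

lemma ff_key (c e : ℕ) (h : c ≤ e) : ff c * ff (e+1) ≤ ff (c+1) * ff e := by
  rw [ff_succ c, ff_succ e]
  have := ff_pos (c+1); have := ff_pos (e+1)
  calc gg c * ff (c+1) * (ff (e+1)) ≤ gg e * ff (c+1) * ff (e+1) := by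
        have h2 := gg_mono h
        have p1 := (ff_pos (c+1)).le
        have p2 := (ff_pos (e+1)).le
        exact mul_le_mul_of_nonneg_right (mul_le_mul_of_nonneg_right h2 p1) p2
    _ = ff (c+1) * (gg e * ff (e+1)) := by ring

lemma smono_step {k r : ℕ} (g : Fin r → Fin k) (hg : StrictMono g) :
    ∀ (n : ℕ) (i j : Fin r), i.val + n = j.val → (g i).val + n ≤ (g j).val := by
  intro n
  induction n with
  | zero => intro i j hij; have : i = j := Fin.ext (by omega); subst this; simp
  | succ n ih =>
    intro i j hij
    have hi1 : i.val + 1 < r := by omega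
    have h1 : g i < g ⟨i.val + 1, hi1⟩ := hg (by rw [Fin.lt_def]; simp)
    have h2 := ih ⟨i.val + 1, hi1⟩ j (by simpa using by omega)
    rw [Fin.lt_def] at h1
    omega

lemma smono_bound {k r : ℕ} (g : Fin r → Fin k) (hg : StrictMono g) (i : Fin r) :
    (g i).val + r ≤ k + i.val := by
  have hr : 0 < r := i.pos
  have hlast : i.val + (r - 1 - i.val) = (⟨r-1, by omega⟩ : Fin r).val := by simp; omega
  have h := smono_step g hg (r - 1 - i.val) i ⟨r-1, by omega⟩ hlast
  have := (g ⟨r-1, by omega⟩).isLt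
  omega

lemma top_sum {k : ℕ} (y : Fin k → ℕ) (hy : Monotone y) (u : Finset (Fin k)) :
    ∑ j ∈ u, y j ≤ ∑ j ∈ univ.filter (fun j : Fin k => k - u.card ≤ j.val), y j := by
  set r := u.card with hr
  have hrk : r ≤ k := by simpa using u.card_le_univ
  set e := u.orderEmbOfFin hr.symm with he
  have hmape : Finset.map e.toEmbedding univ = u := by
    apply Finset.eq_of_subset_of_card_le
    · intro j hj
      simp only [Finset.mem_map] at hj
      obtain ⟨i, _, rfl⟩ := hj
      exact Finset.orderEmbOfFin_mem u hr.symm i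
    · simp [hr]
  have e2inj : Function.Injective (fun i : Fin r => (⟨k - r + i.val, by omega⟩ : Fin k)) := by
    intro a b hab
    simp only [Fin.mk.injEq] at hab
    exact Fin.ext (by omega)
  have hmape2 : Finset.map ⟨_, e2inj⟩ univ
      = univ.filter (fun j : Fin k => k - r ≤ j.val) := by
    ext j
    simp only [Finset.mem_map, Finset.mem_filter, Finset.mem_univ, true_and,
      Function.Embedding.coeFn_mk]
    constructor
    · rintro ⟨i, hi⟩
      subst hi
      simp
    · intro hj
      exact ⟨⟨j.val - (k - r), by omega⟩, Fin.ext (by simp; omega)⟩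
  rw [← hmape, ← hmape2, Finset.sum_map, Finset.sum_map]
  apply Finset.sum_le_sum
  intro i _
  apply hy
  rw [Fin.le_def]
  have := smono_bound e e.strictMono i
  simpa using by omega

def PS {k : ℕ} (x : Fin k → ℕ) (m : ℕ) : ℕ :=
  ∑ j ∈ univ.filter (fun j : Fin k => j.val < m), x j

lemma PS_succ {k : ℕ} (z : Fin k → ℕ) (i : Fin k) :
    PS z (i.val + 1) = PS z i.val + z i := by
  unfold PS
  have h : univ.filter (fun j : Fin k => j.val < i.val + 1)
      = insert i (univ.filter (fun j : Fin k => j.val < i.val)) := by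
    ext j
    simp only [Finset.mem_filter, Finset.mem_univ, true_and, Finset.mem_insert]
    constructor
    · intro hj
      rcases Nat.lt_or_ge j.val i.val with h1 | h1
      · exact Or.inr (by simp [h1])
      · exact Or.inl (Fin.ext (by omega))
    · rintro (rfl | hj)
      · omega
      · simp at hj; omega
  rw [h, Finset.sum_insert (by simp)]
  ring

lemma core {k : ℕ} (M : ℕ) : ∀ (x y : Fin k → ℕ), (∑ j, y j * y j) = M →
    Monotone x → Monotone y → (∀ m, PS y m ≤ PS x m) → (∑ j, y j = ∑ j, x j) →
    ∏ j, ff (y j) ≤ ∏ j, ff (x j) := by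
  induction M using Nat.strong_induction_on with
  | _ M ih =>
  intro x y hM hx hy hP hS
  by_cases hxy : ∀ j, x j = y j
  · exact le_of_eq (Finset.prod_congr rfl (fun j _ => by rw [hxy j]))
  push_neg at hxy
  -- minimal index where they differ
  have hS1 : (univ.filter (fun j : Fin k => x j ≠ y j)).Nonempty := by
    obtain ⟨j, hj⟩ := hxy
    exact ⟨j, by simp [hj]⟩
  set i := (univ.filter (fun j : Fin k => x j ≠ y j)).min' hS1 with hi
  have imem : x i ≠ y i := by
    have := (univ.filter (fun j : Fin k => x j ≠ y j)).min'_mem hS1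
    simp only [Finset.mem_filter] at this
    exact this.2
  have imin : ∀ l : Fin k, x l ≠ y l → i ≤ l := fun l hl =>
    Finset.min'_le _ l (by simp [hl])
  -- y i < x i
  have hyxi : y i < x i := by
    have h1 := hP (i.val + 1)
    rw [PS_succ, PS_succ] at h1
    have h2 : PS y i.val = PS x i.val := by
      unfold PS
      apply Finset.sum_congr rfl
      intro l hl
      simp only [Finset.mem_filter, Finset.mem_univ, true_and] at hl
      by_contra hne
      have := imin l (fun hc => hne hc.symm)
      rw [Fin.le_def] at this
      omega
    rw [h2] at h1
    omega
  -- minimal index where x < y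
  have hS2 : (univ.filter (fun l : Fin k => x l < y l)).Nonempty := by
    by_contra hempty
    rw [Finset.not_nonempty_iff_eq_empty, Finset.filter_eq_empty_iff] at hempty
    have : ∑ j, y j < ∑ j, x j := by
      apply Finset.sum_lt_sum
      · intro l _
        have := hempty (Finset.mem_univ l)
        omega
      · exact ⟨i, Finset.mem_univ i, hyxi⟩
    omega
  set j := (univ.filter (fun l : Fin k => x l < y l)).min' hS2 with hj
  have jmem : x j < y j := by
    have := (univ.filter (fun l : Fin k => x l < y l)).min'_mem hS2
    simp only [Finset.mem_filter] at this
    exact this.2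
  have jmin : ∀ l : Fin k, x l < y l → j ≤ l := fun l hl =>
    Finset.min'_le _ l (by simp [hl])
  have hij : i ≤ j := imin j (by omega)
  have hcd : y i + 2 ≤ y j := by
    have := hx hij
    omega
  -- i' : last index with value y i ; j' : first index with value y j
  have hS3 : (univ.filter (fun l : Fin k => y l = y i)).Nonempty := ⟨i, by simp⟩
  set i' := (univ.filter (fun l : Fin k => y l = y i)).max' hS3 with hi'
  have i'mem : y i' = y i := by
    have := (univ.filter (fun l : Fin k => y l = y i)).max'_mem hS3
    simp only [Finset.mem_filter] at this
    exact this.2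
  have i'max : ∀ l : Fin k, y l = y i → l ≤ i' := fun l hl =>
    Finset.le_max' _ l (by simp [hl])
  have hS4 : (univ.filter (fun l : Fin k => y l = y j)).Nonempty := ⟨j, by simp⟩
  set j' := (univ.filter (fun l : Fin k => y l = y j)).min' hS4 with hj'
  have j'mem : y j' = y j := by
    have := (univ.filter (fun l : Fin k => y l = y j)).min'_mem hS4
    simp only [Finset.mem_filter] at this
    exact this.2
  have j'min : ∀ l : Fin k, y l = y j → j' ≤ l := fun l hl =>
    Finset.min'_le _ l (by simp [hl])
  have hii' : i ≤ i' := i'max i rfl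
  have hj'j : j' ≤ j := j'min j rfl
  have hi'j' : i' < j' := by
    by_contra hc
    push_neg at hc
    have := hy hc
    omega
  have hne : i' ≠ j' := Fin.ne_of_lt hi'j'
  -- the transferred tuple
  obtain ⟨e, he⟩ : ∃ e, y j = e + 1 := ⟨y j - 1, by omega⟩
  set y2 : Fin k → ℕ := fun l => if l = i' then y i + 1 else if l = j' then e else y l
    with hy2
  have hy2i' : y2 i' = y i + 1 := by simp [hy2]
  have hy2j' : y2 j' = e := by simp [hy2, hne.symm, hne]
  have hy2other : ∀ l, l ≠ i' → l ≠ j' → y2 l = y l := by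
    intro l h1 h2; simp [hy2, h1, h2]
  -- values above i' are ≥ y i + 1 ; values below j' are ≤ e
  have hgt : ∀ l, i' < l → y i + 1 ≤ y l := by
    intro l hl
    have h1 : y i' ≤ y l := hy hl.le
    rcases Nat.lt_or_ge (y i) (y l) with h2 | h2
    · omega
    · have : y l = y i := by omega
      have := i'max l this
      exact absurd hl (by omega)
  have hlt : ∀ l, l < j' → y l ≤ e := by
    intro l hl
    have h1 : y l ≤ y j' := hy hl.le
    rcases Nat.lt_or_ge (y l) (y j) with h2 | h2
    · omega
    · have : y l = y j := by omega
      have := j'min l this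
      exact absurd hl (by omega)
  -- y2 is monotone
  have hy2mono : Monotone y2 := by
    intro a b hab
    rcases eq_or_lt_of_le hab with rfl | hab
    · exact le_refl _
    by_cases ha : a = i'
    · subst ha
      by_cases hb : b = j'
      · subst hb; rw [hy2i', hy2j']; omega
      · rw [hy2i', hy2other b (Fin.ne_of_lt hab).symm hb]
        exact hgt b hab
    · by_cases ha2 : a = j'
      · subst ha2
        have hbne : b ≠ i' := by
          intro hc
          rw [hc] at hab
          exact absurd (hi'j'.trans hab) (lt_irrefl _)
        by_cases hb2 : b = j'
        · exact absurd (hb2 ▸ hab) (lt_irrefl _)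
        · rw [hy2j', hy2other b hbne hb2]
          have := hy hab.le
          omega
      · by_cases hb : b = i'
        · rw [hy2other a ha ha2, hb, hy2i']
          have : y a ≤ y i' := hy (hb ▸ hab.le)
          omega
        · by_cases hb2 : b = j'
          · rw [hy2other a ha ha2, hb2, hy2j']
            exact hlt a (hb2 ▸ hab)
          · rw [hy2other a ha ha2, hy2other b hb hb2]
            exact hy hab.le
  -- decomposition helper
  have hdecN : ∀ (A : Finset (Fin k)) (g : Fin k → ℕ), i' ∈ A → j' ∈ A →
      ∑ l ∈ A, g l = g i' + g j' + ∑ l ∈ (A.erase i').erase j', g l := by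
    intro A g h1 h2
    rw [← Finset.add_sum_erase A g h1,
        ← Finset.add_sum_erase (A.erase i') g (Finset.mem_erase.2 ⟨hne.symm, h2⟩)]
    ring
  have herase_ne : ∀ (A : Finset (Fin k)) (l : Fin k), l ∈ (A.erase i').erase j' →
      y2 l = y l := by
    intro A l hl
    rw [Finset.mem_erase, Finset.mem_erase] at hl
    exact hy2other l hl.2.1 hl.1
  have hyii : y i ≤ e := by omega
  -- prefix sums of y2 still dominated
  have hP2 : ∀ m, PS y2 m ≤ PS x m := by
    intro m
    unfold PS
    rcases Nat.lt_or_ge i'.val m with hmi | hmi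
    · have hi'A : i' ∈ univ.filter (fun l : Fin k => l.val < m) := by simp [hmi]
      rcases Nat.lt_or_ge j'.val m with hmj | hmj
      · -- both in the prefix
        have hj'A : j' ∈ univ.filter (fun l : Fin k => l.val < m) := by simp [hmj]
        rw [hdecN _ y2 hi'A hj'A]
        have h1 := hdecN (univ.filter (fun l : Fin k => l.val < m)) y hi'A hj'A
        have h2 : ∑ l ∈ (((univ.filter (fun l : Fin k => l.val < m)).erase i').erase j'), y2 l
            = ∑ l ∈ (((univ.filter (fun l : Fin k => l.val < m)).erase i').erase j'), y l :=
          Finset.sum_congr rfl (fun l hl => herase_ne _ l hl)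
        have h3 := hP m
        unfold PS at h3
        rw [hy2i', hy2j']
        omega
      · -- i' in, j' out : strict domination available
        have hstep : ∑ l ∈ univ.filter (fun l : Fin k => l.val < m), y2 l
            = (∑ l ∈ univ.filter (fun l : Fin k => l.val < m), y l) + 1 := by
          rw [← Finset.add_sum_erase _ y2 hi'A, ← Finset.add_sum_erase _ y hi'A]
          have h2 : ∑ l ∈ (univ.filter (fun l : Fin k => l.val < m)).erase i', y2 l
              = ∑ l ∈ (univ.filter (fun l : Fin k => l.val < m)).erase i', y l := by
            apply Finset.sum_congr rfl
            intro l hl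
            rw [Finset.mem_erase] at hl
            apply hy2other l hl.1
            intro hc
            subst hc
            simp only [Finset.mem_filter, Finset.mem_univ, true_and] at hl
            omega
          rw [hy2i', h2]
          omega
        have hstrict : (∑ l ∈ univ.filter (fun l : Fin k => l.val < m), y l)
            < ∑ l ∈ univ.filter (fun l : Fin k => l.val < m), x l := by
          apply Finset.sum_lt_sum
          · intro l hl
            simp only [Finset.mem_filter, Finset.mem_univ, true_and] at hl
            by_contra hc
            push_neg at hc
            have := jmin l hc
            rw [Fin.le_def] at this
            rw [Fin.le_def] at hj'j
            omega
          · refine ⟨i, ?_, hyxi⟩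
            simp only [Finset.mem_filter, Finset.mem_univ, true_and]
            rw [Fin.le_def] at hii'
            omega
        have h3 := hP m
        unfold PS at h3
        omega
    · -- prefix untouched
      have heq : ∑ l ∈ univ.filter (fun l : Fin k => l.val < m), y2 l
          = ∑ l ∈ univ.filter (fun l : Fin k => l.val < m), y l := by
        apply Finset.sum_congr rfl
        intro l hl
        simp only [Finset.mem_filter, Finset.mem_univ, true_and] at hl
        rw [Fin.lt_def] at hi'j'
        exact hy2other l (fun hc => by subst hc; omega) (fun hc => by subst hc; omega)
      rw [heq]
      exact hP m
  -- total sums agree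
  have hi'U : i' ∈ (univ : Finset (Fin k)) := Finset.mem_univ _
  have hj'U : j' ∈ (univ : Finset (Fin k)) := Finset.mem_univ _
  have hT : ∑ l, y2 l = ∑ l, y l := by
    rw [hdecN univ y2 hi'U hj'U, hdecN univ y hi'U hj'U, hy2i', hy2j',
      Finset.sum_congr rfl (fun l hl => herase_ne univ l hl), i'mem, j'mem, he]
    ring
  -- measure strictly decreases
  have hMlt : (∑ l, y2 l * y2 l) < M := by
    rw [← hM, hdecN univ (fun l => y2 l * y2 l) hi'U hj'U,
      hdecN univ (fun l => y l * y l) hi'U hj'U]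
    rw [hy2i', hy2j', i'mem, j'mem, he,
      Finset.sum_congr rfl (fun l hl => by rw [herase_ne univ l hl])]
    have hq : (y i + 1) * (y i + 1) + e * e < y i * y i + (e + 1) * (e + 1) := by
      nlinarith
    linarith [hq]
  -- product step
  have hBnn : (0:ℝ) ≤ ∏ l ∈ ((univ.erase i').erase j' : Finset (Fin k)), ff (y l) :=
    Finset.prod_nonneg (fun l _ => (ff_pos _).le)
  have hdecP : ∀ (g : Fin k → ℝ),
      ∏ l, g l = g i' * g j' * ∏ l ∈ (univ.erase i').erase j', g l := by
    intro g
    rw [← Finset.mul_prod_erase univ g hi'U,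
        ← Finset.mul_prod_erase (univ.erase i') g (Finset.mem_erase.2 ⟨hne.symm, hj'U⟩)]
    ring
  have hprod : ∏ l, ff (y l) ≤ ∏ l, ff (y2 l) := by
    rw [hdecP (fun l => ff (y l)), hdecP (fun l => ff (y2 l))]
    have hBeq : ∏ l ∈ ((univ.erase i').erase j' : Finset (Fin k)), ff (y2 l)
        = ∏ l ∈ ((univ.erase i').erase j' : Finset (Fin k)), ff (y l) :=
      Finset.prod_congr rfl (fun l hl => by rw [herase_ne univ l hl])
    rw [hy2i', hy2j', i'mem, j'mem, he, hBeq]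
    exact mul_le_mul_of_nonneg_right (ff_key (y i) e hyii) hBnn
  calc ∏ l, ff (y l) ≤ ∏ l, ff (y2 l) := hprod
    _ ≤ ∏ l, ff (x l) := ih _ hMlt x y2 rfl hx hy2mono hP2 (by rw [hT]; exact hS)

lemma suffix_card {k m : ℕ} (hmk : m ≤ k) :
    ((univ : Finset (Fin k)).filter (fun j : Fin k => m ≤ j.val)).card = k - m := by
  have e2inj : Function.Injective
      (fun i : Fin (k - m) => (⟨m + i.val, by omega⟩ : Fin k)) := by
    intro a b hab
    simp only [Fin.mk.injEq] at hab
    exact Fin.ext (by omega)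
  have hmape2 : Finset.map ⟨_, e2inj⟩ univ
      = (univ : Finset (Fin k)).filter (fun j : Fin k => m ≤ j.val) := by
    ext j
    simp only [Finset.mem_map, Finset.mem_filter, Finset.mem_univ, true_and,
      Function.Embedding.coeFn_mk]
    constructor
    · rintro ⟨i, hi⟩
      subst hi
      simp
    · intro hj
      exact ⟨⟨j.val - m, by omega⟩, Fin.ext (by simp; omega)⟩
  rw [← hmape2]
  simp

theorem stmt3' (k : ℕ) (x y : Fin k → ℕ) (hmaj : NatMajorizes y x) :
    ∏ j, ff (y j) ≤ ∏ j, ff (x j) := by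
  obtain ⟨hsum, hsub⟩ := hmaj
  set σ := Tuple.sort x with hσ
  set τ := Tuple.sort y with hτ
  set x' : Fin k → ℕ := x ∘ σ with hx'def
  set y' : Fin k → ℕ := y ∘ τ with hy'def
  have hx' : Monotone x' := Tuple.monotone_sort x
  have hy' : Monotone y' := Tuple.monotone_sort y
  have hprodx : ∏ j, ff (x' j) = ∏ j, ff (x j) := Equiv.prod_comp σ (fun j => ff (x j))
  have hprody : ∏ j, ff (y' j) = ∏ j, ff (y j) := Equiv.prod_comp τ (fun j => ff (y j))
  have hsumx : ∑ j, x' j = ∑ j, x j := Equiv.sum_comp σ x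
  have hsumy : ∑ j, y' j = ∑ j, y j := Equiv.sum_comp τ y
  have htot : ∑ j, y' j = ∑ j, x' j := by rw [hsumx, hsumy, hsum]
  -- prefix sum domination for the sorted tuples
  have hP : ∀ m, PS y' m ≤ PS x' m := by
    intro m
    rcases Nat.lt_or_ge m k with hmk | hmk
    · -- m < k
      set A := (univ : Finset (Fin k)).filter (fun j : Fin k => m ≤ j.val) with hA
      have hAcard : A.card = k - m := suffix_card hmk.le
      have hpart : ∀ z : Fin k → ℕ, PS z m + ∑ j ∈ A, z j = ∑ j, z j := by
        intro z
        unfold PS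
        rw [← Finset.sum_filter_add_sum_filter_not univ (fun j : Fin k => j.val < m) z]
        have hAeq : A = univ.filter (fun j : Fin k => ¬ j.val < m) := by
          rw [hA]
          apply Finset.filter_congr
          intro j _
          simp [not_lt]
        rw [hAeq]
      have hkey : ∑ j ∈ A, x' j ≤ ∑ j ∈ A, y' j := by
        have hs : ∑ j ∈ A.image σ, x j = ∑ j ∈ A, x' j :=
          Finset.sum_image (fun a _ b _ hab => σ.injective hab)
        obtain ⟨t, htcard, hts⟩ := hsub (A.image σ)
        have hu : ∑ j ∈ t.image τ.symm, y' j = ∑ j ∈ t, y j := by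
          rw [Finset.sum_image (fun a _ b _ hab => τ.symm.injective hab)]
          apply Finset.sum_congr rfl
          intro a _
          simp [hy'def]
        have hucard : (t.image τ.symm).card = k - m := by
          rw [Finset.card_image_of_injective _ τ.symm.injective, htcard,
            Finset.card_image_of_injective _ σ.injective, hAcard]
        have htop := top_sum y' hy' (t.image τ.symm)
        rw [hucard] at htop
        have hm' : k - (k - m) = m := by omega
        rw [hm'] at htop
        calc ∑ j ∈ A, x' j = ∑ j ∈ A.image σ, x j := hs.symm
          _ ≤ ∑ j ∈ t, y j := hts
          _ = ∑ j ∈ t.image τ.symm, y' j := hu.symm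
          _ ≤ ∑ j ∈ A, y' j := htop
      have p1 := hpart y'
      have p2 := hpart x'
      omega
    · -- k ≤ m : full sums
      have hfull : ∀ z : Fin k → ℕ, PS z m = ∑ j, z j := by
        intro z
        unfold PS
        rw [Finset.filter_true_of_mem]
        intro j _
        omega
      rw [hfull, hfull, htot]
  rw [← hprodx, ← hprody]
  exact core (∑ j, y' j * y' j) x' y' rfl hx' hy' hP htot

/-- `L(x) = ∏_j x_j! / x_j^{x_j}` (with `0^0 = 1`) is Schur-concave on integer
`k`-tuples: if `y` majorizes `x` then `L(y) ≤ L(x)`. -/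
theorem stmt3 (k : ℕ) (L : (Fin k → ℕ) → ℝ)
    (hL : ∀ x, L x = ∏ j, ((x j).factorial : ℝ) / ((x j : ℝ) ^ (x j)))
    (x y : Fin k → ℕ) (hmaj : NatMajorizes y x) :
    L y ≤ L x := by
  rw [hL, hL]
  have h := stmt3' k x y hmaj
  unfold ff at h
  exact h
end

section
/- For every positive integer n, sum_{x=0}^n |n - 2x| * C(n,x) equals n * C(n, n/2) if n is even, and equals 2n * C(n-1, (n-1)/2) if n is odd. -/
lemma h1 (n k : ℕ) (hn : 0 < n) : (k+1) * n.choose (k+1) = n * (n-1).choose k := by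
  obtain ⟨m, rfl⟩ := Nat.exists_eq_add_of_lt hn
  simp only [Nat.add_sub_cancel]
  rw [mul_comm, Nat.add_one_mul_choose_eq]

lemma h2 (n k : ℕ) (hk : k < n) : (n - k) * n.choose k = n * (n-1).choose k := by
  rw [← Nat.choose_symm hk.le]
  have h3 : n - k = (n - k - 1) + 1 := by omega
  rw [h3, h1 n _ (by omega)]
  congr 1
  have hs : (n-1).choose (n - k - 1) = (n-1).choose ((n-1) - (n-k-1)) := (Nat.choose_symm (by omega)).symm
  rw [hs]
  congr 1
  omega

lemma telesc (n : ℕ) (hn : 0 < n) : ∀ m, m < n →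
    ∑ x ∈ Finset.range (m+1), ((n:ℤ) - 2*x) * n.choose x = n * (n-1).choose m := by
  intro m
  induction m with
  | zero => simp
  | succ m ih =>
    intro hm
    rw [Finset.sum_range_succ, ih (by omega)]
    have e1 : ((m:ℤ)+1) * n.choose (m+1) = n * (n-1).choose m := by
      exact_mod_cast h1 n m hn
    have e2 : ((n:ℤ) - (m+1)) * n.choose (m+1) = n * (n-1).choose (m+1) := by
      have := h2 n (m+1) hm
      have hc : ((n - (m+1) : ℕ) : ℤ) = (n:ℤ) - (m+1) := by
        have : m + 1 ≤ n := hm.le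
        push_cast [this]; ring
      rw [← hc]; exact_mod_cast this
    push_cast
    nlinarith [e1, e2]

lemma fsymm (n x : ℕ) (hx : x ≤ n) :
    (((n:ℤ) - 2*(n - x : ℕ)).natAbs * n.choose (n - x) : ℕ)
      = ((n:ℤ) - 2*x).natAbs * n.choose x := by
  rw [Nat.choose_symm hx]
  congr 1
  have : ((n - x : ℕ) : ℤ) = (n:ℤ) - x := by omega
  rw [this]
  have : (n:ℤ) - 2*((n:ℤ) - x) = -((n:ℤ) - 2*x) := by ring
  rw [this, Int.natAbs_neg]

lemma lower_sum (n m : ℕ) (hm : m < n) (h2 : 2*m ≤ n) :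
    ∑ x ∈ Finset.range (m+1), (((n:ℤ) - 2*x).natAbs * n.choose x : ℕ)
      = n * (n-1).choose m := by
  have := telesc n (by omega) m hm
  have key : ∑ x ∈ Finset.range (m+1), ((((n:ℤ) - 2*x).natAbs * n.choose x : ℕ) : ℤ)
      = (n * (n-1).choose m : ℤ) := by
    rw [← this]
    apply Finset.sum_congr rfl
    intro x hx
    simp only [Finset.mem_range] at hx
    have hxm : x ≤ m := by omega
    have : ((n:ℤ) - 2*x).natAbs = (n:ℤ) - 2*x := by
      rw [Int.natAbs_of_nonneg (by push_cast; omega)]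
    push_cast [this]
    ring
  exact_mod_cast key

/-- `∑_{x=0}^n |n-2x| C(n,x)` equals `n·C(n,n/2)` for even `n`
and `2n·C(n-1,(n-1)/2)` for odd `n`. -/
theorem stmt5 (n : ℕ) (hn : 0 < n) :
    (Even n →
      ∑ x ∈ Finset.range (n + 1), ((n : ℤ) - 2 * x).natAbs * n.choose x
        = n * n.choose (n / 2)) ∧
    (Odd n →
      ∑ x ∈ Finset.range (n + 1), ((n : ℤ) - 2 * x).natAbs * n.choose x
        = 2 * n * (n - 1).choose ((n - 1) / 2)) := by
  set f : ℕ → ℕ := fun x => ((n : ℤ) - 2 * x).natAbs * n.choose x with hf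
  constructor
  · rintro ⟨m, rfl⟩
    have hm : 0 < m := by omega
    have hsplit : ∑ x ∈ Finset.range (m + m + 1), f x
        = ∑ x ∈ Finset.range m, f x + ∑ x ∈ Finset.Ico m (m+m+1), f x := by
      rw [Finset.range_eq_Ico, ← Finset.sum_Ico_consecutive f (Nat.zero_le m)
        (show m ≤ m+m+1 by omega), Finset.range_eq_Ico]
    have hrefl : ∑ x ∈ Finset.Ico m (m+m+1), f x = ∑ x ∈ Finset.range (m+1), f x := by
      apply Finset.sum_nbij' (fun x => m + m - x) (fun x => m + m - x)
      · intro a ha; simp only [Finset.mem_Ico] at ha; simp only [Finset.mem_range]; omega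
      · intro a ha; simp only [Finset.mem_range] at ha; simp only [Finset.mem_Ico]; omega
      · intro a ha; simp only [Finset.mem_Ico] at ha; omega
      · intro a ha; simp only [Finset.mem_range] at ha; omega
      · intro a ha
        simp only [Finset.mem_Ico] at ha
        exact (fsymm (m+m) a (by omega)).symm
    have hmid : f m = 0 := by
      have hz : ((m + m : ℕ):ℤ) - 2*(m:ℤ) = 0 := by push_cast; ring
      simp only [hf, hz, Int.natAbs_zero, Nat.zero_mul]
    have hlow : ∑ x ∈ Finset.range m, f x = (m+m) * (m+m-1).choose (m-1) := by
      have := lower_sum (m+m) (m-1) (by omega) (by omega)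
      have he : m - 1 + 1 = m := by omega
      rw [he] at this
      exact this
    rw [hsplit, hrefl, Finset.sum_range_succ, hmid, hlow]
    have hch : (m+m).choose ((m+m)/2) = 2 * (m+m-1).choose (m-1) := by
      obtain ⟨k, rfl⟩ : ∃ k, m = k + 1 := ⟨m - 1, by omega⟩
      have hdiv : (k+1+(k+1))/2 = k+1 := by omega
      have hsub : k+1+(k+1)-1 = 2*k+1 := by omega
      have hsub2 : k+1-1 = k := rfl
      rw [hdiv, hsub, hsub2, show k+1+(k+1) = 2*k+1+1 from by omega, Nat.choose_succ_succ]
      have hs : (2*k+1).choose (k+1) = (2*k+1).choose k := by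
        rw [← Nat.choose_symm (show k+1 ≤ 2*k+1 by omega)]
        congr 1; omega
      rw [hs]; ring
    rw [hch]; ring
  · rintro ⟨m, rfl⟩
    have hsplit : ∑ x ∈ Finset.range (2*m+1 + 1), f x
        = ∑ x ∈ Finset.range (m+1), f x + ∑ x ∈ Finset.Ico (m+1) (2*m+1+1), f x := by
      rw [Finset.range_eq_Ico, ← Finset.sum_Ico_consecutive f (Nat.zero_le (m+1))
        (show m+1 ≤ 2*m+1+1 by omega), Finset.range_eq_Ico]
    have hrefl : ∑ x ∈ Finset.Ico (m+1) (2*m+1+1), f x = ∑ x ∈ Finset.range (m+1), f x := by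
      apply Finset.sum_nbij' (fun x => 2*m+1 - x) (fun x => 2*m+1 - x)
      · intro a ha; simp only [Finset.mem_Ico] at ha; simp only [Finset.mem_range]; omega
      · intro a ha; simp only [Finset.mem_range] at ha; simp only [Finset.mem_Ico]; omega
      · intro a ha; simp only [Finset.mem_Ico] at ha; omega
      · intro a ha; simp only [Finset.mem_range] at ha; omega
      · intro a ha
        simp only [Finset.mem_Ico] at ha
        exact (fsymm (2*m+1) a (by omega)).symm
    have hlow : ∑ x ∈ Finset.range (m+1), f x = (2*m+1) * (2*m+1-1).choose m := by
      exact lower_sum (2*m+1) m (by omega) (by omega)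
    rw [hsplit, hrefl, hlow]
    have hd : (2*m+1-1)/2 = m := by omega
    rw [hd]
    ring
end

section
/- Let n >= 4 and let d_1,...,d_n be a strictly convex sequence of reals (i.e., d_{m+1} - d_m is strictly increasing in m). For integers x with n/2 + 1 <= x <= n, define D_x = (1/(2x - n - 1)) * sum_{m = n - x + 2}^{x} d_m. Then D_x is strictly increasing in x on this range. -/
open Finset

lemma slope_mono (n : ℕ) (d : ℕ → ℝ)
    (hconv : ∀ m : ℕ, 2 ≤ m → m ≤ n - 1 → 2 * d m < d (m - 1) + d (m + 1)) :
    ∀ j i : ℕ, 1 ≤ i → i ≤ j → j ≤ n - 1 → d (i + 1) - d i ≤ d (j + 1) - d j := by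
  intro j
  induction j with
  | zero => intro i h1 h2 _; omega
  | succ k ih =>
    intro i h1 h2 h3
    rcases Nat.lt_or_ge i (k+1) with h | h
    · have hk : 1 ≤ k := by omega
      have h4 := ih i h1 (by omega) (by omega)
      have hc := hconv (k+1) (by omega) h3
      have he : (k + 1) - 1 = k := by omega
      rw [he] at hc
      linarith
    · have : i = k + 1 := by omega
      subst this; exact le_refl _

lemma sum_Icc_top (a b : ℕ) (d : ℕ → ℝ) (h : a ≤ b + 1) :
    ∑ m ∈ Icc a (b + 1), d m = (∑ m ∈ Icc a b, d m) + d (b + 1) := by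
  rw [Finset.Icc_eq_cons_Ico h, Finset.sum_cons, Finset.Ico_add_one_right_eq_Icc]
  ring

lemma sum_Icc_bot (a b : ℕ) (d : ℕ → ℝ) (h : a ≤ b) :
    ∑ m ∈ Icc a b, d m = d a + ∑ m ∈ Icc (a + 1) b, d m := by
  rw [Finset.Icc_eq_cons_Ioc h, Finset.sum_cons, ← Finset.Icc_add_one_left_eq_Ioc]

lemma key_ineq (n : ℕ) (hn : 4 ≤ n) (d : ℕ → ℝ)
    (hconv : ∀ m : ℕ, 2 ≤ m → m ≤ n - 1 → 2 * d m < d (m - 1) + d (m + 1)) :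
    ∀ x : ℕ, n + 2 ≤ 2 * x → x ≤ n - 1 →
      2 * ∑ m ∈ Icc (n - x + 2) x, d m
        < (2 * (x : ℝ) - n - 1) * (d (n - x + 1) + d (x + 1)) := by
  intro x
  induction x using Nat.strong_induction_on with
  | _ x ih =>
    intro hx1 hx2
    rcases Nat.lt_or_ge (2 * x) (n + 4) with hcase | hcase
    · -- base cases: 2x = n+2 or 2x = n+3
      rcases Nat.lt_or_ge (2 * x) (n + 3) with hb | hb
      · -- 2x = n + 2
        have hn2 : n = 2 * x - 2 := by omega
        have hx3 : 3 ≤ x := by omega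
        have e1 : n - x + 2 = x := by omega
        have e2 : n - x + 1 = x - 1 := by omega
        have hc := hconv x (by omega) (by omega)
        rw [e1, e2, Finset.Icc_self, Finset.sum_singleton]
        have hcast : (2 * (x : ℝ) - n - 1) = 1 := by
          have : (n : ℝ) = 2 * x - 2 := by
            have : (n : ℕ) + 2 = 2 * x := by omega
            have := congrArg (Nat.cast : ℕ → ℝ) this
            push_cast at this
            linarith
          linarith
        rw [hcast]
        linarith
      · -- 2x = n + 3
        have hxn : 2 * x = n + 3 := by omega
        have hodd : n % 2 = 1 := by omega
        have hn5 : 5 ≤ n := by omega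
        have hx4 : 4 ≤ x := by omega
        have e1 : n - x + 2 = x - 1 := by omega
        have e2 : n - x + 1 = x - 2 := by omega
        have e3 : x - 1 + 1 = x := by omega
        rw [e1, e2]
        have hsum : ∑ m ∈ Icc (x - 1) x, d m = d (x - 1) + d x := by
          rw [sum_Icc_bot _ _ _ (by omega), e3, Finset.Icc_self, Finset.sum_singleton]
        rw [hsum]
        have hc1 := hconv (x - 1) (by omega) (by omega)
        have hc2 := hconv x (by omega) (by omega)
        rw [e3] at hc1
        have e4 : x - 1 - 1 = x - 2 := by omega
        rw [e4] at hc1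
        have e5 : x - 1 = x - 1 := rfl
        have hc2' : 2 * d x < d (x - 1) + d (x + 1) := by
          have : x - 1 = x - 1 := rfl
          convert hc2 using 2
        have hcast : (2 * (x : ℝ) - n - 1) = 2 := by
          have := congrArg (Nat.cast : ℕ → ℝ) hxn
          push_cast at this
          linarith
        rw [hcast]
        linarith
    · -- step: x = y + 1 with n + 2 ≤ 2y
      obtain ⟨y, rfl⟩ : ∃ y, x = y + 1 := ⟨x - 1, by omega⟩
      have hy1 : n + 2 ≤ 2 * y := by omega
      have hy2 : y ≤ n - 1 := by omega
      have hIH := ih y (by omega) hy1 hy2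
      have e1 : n - (y + 1) + 2 = n - y + 1 := by omega
      rw [e1]
      have hsum : ∑ m ∈ Icc (n - y + 1) (y + 1), d m
          = d (n - y + 1) + (∑ m ∈ Icc (n - y + 2) y, d m) + d (y + 1) := by
        rw [sum_Icc_top _ _ _ (by omega), sum_Icc_bot _ _ _ (by omega)]
      rw [hsum]
      have e2 : n - (y + 1) + 1 = n - y := by omega
      rw [e2]
      -- slope inequality : d (n - y + 1) + d (y + 1) ≤ d (n - y) + d (y + 2)
      have hsl := slope_mono n d hconv (y + 1) (n - y) (by omega) (by omega) (by omega)
      have e3 : n - y + 1 = n - y + 1 := rfl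
      have hslope : d (n - y + 1) + d (y + 1) ≤ d (n - y) + d (y + 2) := by
        have : n - y + 1 = (n - y) + 1 := rfl
        linarith [hsl]
      have hk : (1 : ℝ) ≤ 2 * (y : ℝ) - n - 1 := by
        have : (n : ℕ) + 2 ≤ 2 * y := hy1
        have hcast : (n : ℝ) + 2 ≤ 2 * y := by exact_mod_cast this
        linarith
      push_cast
      nlinarith [hIH, hslope, hk]

/-- Averaging lemma: if `d₁,…,d_n` is a strictly convex sequence and, for integers
`n/2 + 1 ≤ x ≤ n`, `D_x = (∑_{m=n-x+2}^x d_m)/(2x-n-1)`, then `D_x` is strictly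
increasing in `x` on this range. -/
theorem stmt8 (n : ℕ) (hn : 4 ≤ n) (d : ℕ → ℝ)
    (hconv : ∀ m : ℕ, 2 ≤ m → m ≤ n - 1 → 2 * d m < d (m - 1) + d (m + 1))
    (D : ℕ → ℝ)
    (hD : ∀ x, D x = (∑ m ∈ Finset.Icc (n - x + 2) x, d m) / (2 * (x : ℝ) - n - 1)) :
    ∀ x : ℕ, (n : ℝ) / 2 + 1 ≤ (x : ℝ) → x < n → D x < D (x + 1) := by
  intro x hx1 hx2
  have hx1' : n + 2 ≤ 2 * x := by
    have : (n : ℝ) + 2 ≤ 2 * x := by linarith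
    exact_mod_cast this
  have hkey := key_ineq n hn d hconv x hx1' (by omega)
  rw [hD x, hD (x + 1)]
  have e1 : n - (x + 1) + 2 = n - x + 1 := by omega
  rw [e1]
  have hsum : ∑ m ∈ Icc (n - x + 1) (x + 1), d m
      = d (n - x + 1) + (∑ m ∈ Icc (n - x + 2) x, d m) + d (x + 1) := by
    rw [sum_Icc_top _ _ _ (by omega), sum_Icc_bot _ _ _ (by omega)]
  rw [hsum]
  have hk : (1 : ℝ) ≤ 2 * (x : ℝ) - n - 1 := by
    have : (n : ℝ) + 2 ≤ 2 * x := by exact_mod_cast hx1'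
    linarith
  rw [div_lt_div_iff₀ (by linarith) (by push_cast; linarith)]
  push_cast
  nlinarith [hkey]
end

section
/- For an integer n >= 2 and integers x in the range n/2 + 1 <= x <= n, the quantity Q(x) = (x/(n - x + 1))^{1/(2x - n - 1)} is strictly increasing in x (for x where the exponent is positive), equivalently log Q(x) = (log x - log(n - x + 1))/(2x - n - 1) is strictly increasing. -/
open Real intervalIntegral

/-- Key real inequality: for `1 < a < x`,
`2(log x - log a) < (x-a)((log a - log(a-1)) + (log(x+1) - log x))`.
Proved by comparing integrals of `1/t` over symmetric pairs. -/
private lemma key_real (a x : ℝ) (ha : 1 < a) (hax : a < x) :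
    2 * (Real.log x - Real.log a) <
      (x - a) * ((Real.log a - Real.log (a - 1)) + (Real.log (x + 1) - Real.log x)) := by
  set c : ℝ := x - a with hc
  have hc0 : 0 < c := by rw [hc]; linarith
  have hp1 : ∀ u : ℝ, 0 ≤ u → 0 < a + u * c := by intro u hu; nlinarith
  have hq1 : ∀ u : ℝ, u ≤ 1 → 0 < x - u * c := by intro u hu; nlinarith
  have hp2 : ∀ u : ℝ, 0 ≤ u → 0 < a - 1 + u := by intro u hu; linarith
  have hq2 : ∀ u : ℝ, u ≤ 1 → 0 < x + 1 - u := by intro u hu; linarith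
  set f : ℝ → ℝ := fun u => 1 / (a + u * c) + 1 / (x - u * c) with hf
  set g : ℝ → ℝ := fun u => 1 / (a - 1 + u) + 1 / (x + 1 - u) with hg
  have hIcc : Set.uIcc (0:ℝ) 1 = Set.Icc 0 1 := Set.uIcc_of_le zero_le_one
  have hfc : ContinuousOn f (Set.uIcc (0:ℝ) 1) := by
    rw [hIcc]
    apply ContinuousOn.add
    · exact continuousOn_const.div (by fun_prop) fun u hu => (hp1 u hu.1).ne'
    · exact continuousOn_const.div (by fun_prop) fun u hu => (hq1 u hu.2).ne'
  have hgc : ContinuousOn g (Set.uIcc (0:ℝ) 1) := by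
    rw [hIcc]
    apply ContinuousOn.add
    · exact continuousOn_const.div (by fun_prop) fun u hu => (hp2 u hu.1).ne'
    · exact continuousOn_const.div (by fun_prop) fun u hu => (hq2 u hu.2).ne'
  have hfi : IntervalIntegrable f MeasureTheory.volume 0 1 := hfc.intervalIntegrable
  have hgi : IntervalIntegrable g MeasureTheory.volume 0 1 := hgc.intervalIntegrable
  -- FTC for c • f
  have hF : ∀ u ∈ Set.uIcc (0:ℝ) 1,
      HasDerivAt (fun u : ℝ => Real.log (a + u * c) - Real.log (x - u * c)) (c * f u) u := by
    intro u hu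
    rw [hIcc] at hu
    have h1 : HasDerivAt (fun u : ℝ => a + u * c) c u := by
      simpa using ((hasDerivAt_id u).mul_const c).const_add a
    have h2 : HasDerivAt (fun u : ℝ => x - u * c) (-c) u := by
      simpa using ((hasDerivAt_id u).mul_const c).const_sub x
    have hl1 := h1.log (hp1 u hu.1).ne'
    have hl2 := h2.log (hq1 u hu.2).ne'
    have h := hl1.sub hl2
    refine h.congr_deriv ?_
    rw [hf]
    field_simp
    ring
  have hG : ∀ u ∈ Set.uIcc (0:ℝ) 1,
      HasDerivAt (fun u : ℝ => Real.log (a - 1 + u) - Real.log (x + 1 - u)) (g u) u := by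
    intro u hu
    rw [hIcc] at hu
    have h1 : HasDerivAt (fun u : ℝ => a - 1 + u) 1 u := by
      simpa using (hasDerivAt_id u).const_add (a - 1)
    have h2 : HasDerivAt (fun u : ℝ => x + 1 - u) (-1) u := by
      simpa using (hasDerivAt_id u).const_sub (x + 1)
    have hl1 := h1.log (hp2 u hu.1).ne'
    have hl2 := h2.log (hq2 u hu.2).ne'
    have h := hl1.sub hl2
    refine h.congr_deriv ?_
    simp only [hg]
    ring
  have hcfint : IntervalIntegrable (fun u => c * f u) MeasureTheory.volume 0 1 :=
    hfi.const_mul c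
  have hintf : (∫ u in (0:ℝ)..1, c * f u) = 2 * (Real.log x - Real.log a) := by
    rw [integral_eq_sub_of_hasDerivAt hF hcfint]
    have e1 : a + 1 * c = x := by rw [hc]; ring
    have e2 : x - 1 * c = a := by rw [hc]; ring
    simp only [one_mul] at e1 e2
    simp [e1, e2]
    ring
  have hintg : (∫ u in (0:ℝ)..1, g u) =
      (Real.log a - Real.log (a - 1)) + (Real.log (x + 1) - Real.log x) := by
    rw [integral_eq_sub_of_hasDerivAt hG hgi]
    norm_num
    ring
  -- pointwise strict inequality on the open interval
  have hlt : ∀ u ∈ Set.Ioo (0:ℝ) 1, 0 < g u - f u := by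
    intro u hu
    obtain ⟨hu0, hu1⟩ := hu
    have hP1 : 0 < (a + u * c) * (x - u * c) :=
      mul_pos (hp1 u hu0.le) (hq1 u hu1.le)
    have hP2 : 0 < (a - 1 + u) * (x + 1 - u) :=
      mul_pos (hp2 u hu0.le) (hq2 u hu1.le)
    have hdiff : (a + u * c) * (x - u * c) - (a - 1 + u) * (x + 1 - u)
        = ((1 - u) + u * c) * ((1 - u) * (c + 1)) := by rw [hc]; ring
    have hpos1 : 0 < (1 - u) + u * c := by nlinarith
    have hpos2 : 0 < (1 - u) * (c + 1) := by nlinarith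
    have hPlt : (a - 1 + u) * (x + 1 - u) < (a + u * c) * (x - u * c) := by nlinarith
    have n1 : a + u * c ≠ 0 := (hp1 u hu0.le).ne'
    have n2 : x - u * c ≠ 0 := (hq1 u hu1.le).ne'
    have n3 : a - 1 + u ≠ 0 := (hp2 u hu0.le).ne'
    have n4 : x + 1 - u ≠ 0 := (hq2 u hu1.le).ne'
    have e1 : f u = (a + x) / ((a + u * c) * (x - u * c)) := by
      simp only [hf]
      rw [div_add_div _ _ n1 n2]
      congr 1
      ring
    have e2 : g u = (a + x) / ((a - 1 + u) * (x + 1 - u)) := by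
      simp only [hg]
      rw [div_add_div _ _ n3 n4]
      congr 1
      ring
    have hax0 : 0 < a + x := by linarith
    rw [e1, e2, sub_pos]
    exact div_lt_div_of_pos_left hax0 hP2 hPlt
  have hint : 0 < ∫ u in (0:ℝ)..1, (g u - f u) :=
    intervalIntegral_pos_of_pos_on (hgi.sub hfi) hlt zero_lt_one
  rw [integral_sub hgi hfi, sub_pos] at hint
  have hflt : (∫ u in (0:ℝ)..1, f u) <
      (Real.log a - Real.log (a - 1)) + (Real.log (x + 1) - Real.log x) := by
    rw [← hintg]; exact hint
  have : c * (∫ u in (0:ℝ)..1, f u)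
      < c * ((Real.log a - Real.log (a - 1)) + (Real.log (x + 1) - Real.log x)) :=
    mul_lt_mul_of_pos_left hflt hc0
  rw [← intervalIntegral.integral_const_mul, hintf] at this
  exact this

/-- For `n ≥ 2` and integers `x` with `n/2 + 1 ≤ x ≤ n`,
`log Q(x) = (log x - log(n-x+1))/(2x-n-1)` is strictly increasing in `x`;
equivalently `Q(x) = (x/(n-x+1))^{1/(2x-n-1)}` is strictly increasing. -/
theorem stmt9 (n : ℕ) (hn : 2 ≤ n) (Lq : ℕ → ℝ)
    (hLq : ∀ x, Lq x =
      (Real.log x - Real.log ((n : ℝ) - x + 1)) / (2 * (x : ℝ) - n - 1)) :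
    ∀ x : ℕ, (n : ℝ) / 2 + 1 ≤ (x : ℝ) → x < n → Lq x < Lq (x + 1) := by
  intro x hx1 hx2
  have hxn : (x:ℝ) + 1 ≤ n := by exact_mod_cast hx2
  have hk : (1:ℝ) ≤ 2 * (x:ℝ) - n - 1 := by linarith
  set a : ℝ := (n:ℝ) - x + 1 with hadef
  have ha1 : 1 < a := by rw [hadef]; linarith
  have hax : a < (x:ℝ) := by rw [hadef]; linarith
  have key := key_real a x ha1 hax
  have hxa : (x:ℝ) - a = 2 * (x:ℝ) - n - 1 := by rw [hadef]; ring
  rw [hxa] at key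
  rw [hLq x, hLq (x + 1)]
  push_cast
  have e2 : (n:ℝ) - ((x:ℝ) + 1) + 1 = a - 1 := by rw [hadef]; ring
  rw [e2]
  rw [div_lt_div_iff₀ (by linarith) (by linarith)]
  nlinarith [key]
end

section
/- Let f_p(x) = C(n,x) p^x (1-p)^{n-x} be the Binomial(n,p) pmf. For 1/2 < p <= 1 and n/2 < x <= n: f_p(x)/f_p(n-x) = t^{2x-n} > 1 where t = p/(1-p); and f_p(x) < f_p(n-x+1), = , or > according as t < a_n(x), t = a_n(x), or t > a_n(x), where a_n(x) = (x/(n-x+1))^{1/(2x-n-1)} (assume 2x - n - 1 > 0 for the second claim, and p < 1 so t is finite). -/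
/-- For the Binomial(n,p) pmf with `1/2 < p < 1` and `n/2 < x ≤ n`, setting
`t = p/(1-p)`: `f_p(x)/f_p(n-x) = t^{2x-n} > 1`; and if moreover `2x - n - 1 > 0`
then, with `a_n(x) = (x/(n-x+1))^{1/(2x-n-1)}`, `f_p(x)` is `<`, `=`, or `>`
`f_p(n-x+1)` according as `t < a_n(x)`, `t = a_n(x)`, or `t > a_n(x)`. -/
theorem stmt12 (n x : ℕ) (p : ℝ) (hp : 1 / 2 < p) (hp1 : p < 1)
    (hx : (n : ℝ) / 2 < x) (hxn : x ≤ n)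
    (f : ℕ → ℝ) (hf : ∀ z, f z = (n.choose z : ℝ) * p ^ z * (1 - p) ^ (n - z))
    (t : ℝ) (ht : t = p / (1 - p))
    (a : ℝ) (ha : a = ((x : ℝ) / ((n : ℝ) - x + 1)) ^ ((1 : ℝ) / (2 * (x : ℝ) - n - 1))) :
    (f x / f (n - x) = t ^ (2 * x - n) ∧ 1 < t ^ (2 * x - n)) ∧
    (n + 1 < 2 * x →
      ((t < a → f x < f (n - x + 1)) ∧
       (t = a → f x = f (n - x + 1)) ∧
       (a < t → f (n - x + 1) < f x))) := by
  have hq : (0:ℝ) < 1 - p := by linarith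
  have hp0 : (0:ℝ) < p := by linarith
  have ht0 : 0 < t := by rw [ht]; positivity
  have ht1 : 1 < t := by rw [ht, lt_div_iff₀ hq]; linarith
  have hn2x : n < 2 * x := by
    have h : (n:ℝ) < 2 * x := by linarith
    exact_mod_cast h
  have hC : (0:ℝ) < (n.choose x : ℝ) := by exact_mod_cast Nat.choose_pos hxn
  constructor
  · constructor
    · have h1 : f x = (n.choose x : ℝ) * p ^ x * (1-p) ^ (n - x) := hf x
      have h2 : f (n-x) = (n.choose x : ℝ) * p ^ (n-x) * (1-p) ^ x := by
        rw [hf, Nat.choose_symm hxn, Nat.sub_sub_self hxn]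
      have hpx : p ^ x = p ^ (n - x) * p ^ (2*x - n) := by
        rw [← pow_add]; congr 1; omega
      have hqx : (1-p) ^ x = (1-p) ^ (n - x) * (1-p) ^ (2*x - n) := by
        rw [← pow_add]; congr 1; omega
      rw [h1, h2, hpx, hqx, ht, div_pow]
      have hpne : p ≠ 0 := ne_of_gt hp0
      have hqne : (1:ℝ) - p ≠ 0 := ne_of_gt hq
      have hCne : (n.choose x : ℝ) ≠ 0 := ne_of_gt hC
      field_simp
    · exact one_lt_pow₀ ht1 (by omega)
  · intro h2x
    set j := 2*x - n - 1 with hj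
    have hj0 : j ≠ 0 := by omega
    have hx1 : 1 ≤ x := by omega
    have hnx1 : n - x + 1 ≤ n := by omega
    have hchoose : n.choose (n - x + 1) * (n - x + 1) = n.choose x * x := by
      have h := Nat.choose_succ_right_eq n (x - 1)
      have hx' : x - 1 + 1 = x := by omega
      rw [hx'] at h
      have hsymm : n.choose (n - x + 1) = n.choose (x - 1) := by
        have he : n - (x-1) = n - x + 1 := by omega
        rw [← he, Nat.choose_symm (by omega)]
      have he2 : n - (x - 1) = n - x + 1 := by omega
      rw [hsymm, ← he2]
      exact h.symm
    have hC' : (0:ℝ) < (n.choose (n-x+1) : ℝ) := by exact_mod_cast Nat.choose_pos hnx1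
    have hP : (0:ℝ) < p ^ x * (1-p)^(n-x) := by positivity
    have hfx : f x = (n.choose x : ℝ) * (p ^ x * (1-p)^(n-x)) := by rw [hf]; ring
    have hkey : f (n-x+1) * t ^ j = (n.choose (n-x+1):ℝ) * (p ^ x * (1-p)^(n-x)) := by
      rw [hf, ht]
      have h1 : n - (n - x + 1) = x - 1 := by omega
      have e1 : p ^ x = p ^ (n-x+1) * p ^ j := by rw [← pow_add]; congr 1; omega
      have e2 : (1-p) ^ (x-1) = (1-p) ^ (n-x) * (1-p) ^ j := by rw [← pow_add]; congr 1; omega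
      rw [h1, e2, e1, div_pow]
      have hpne : p ≠ 0 := ne_of_gt hp0
      have hqne : (1:ℝ) - p ≠ 0 := ne_of_gt hq
      field_simp
    have hxR : (x:ℝ) ≤ n := by exact_mod_cast hxn
    have hd : (0:ℝ) < (n:ℝ) - x + 1 := by linarith
    have h2xR : (n:ℝ) + 1 < 2 * x := by exact_mod_cast h2x
    set c : ℝ := (x:ℝ) / ((n:ℝ) - x + 1) with hc
    have hc1 : 1 < c := by
      rw [hc, lt_div_iff₀ hd]; linarith
    have hc0 : (0:ℝ) < c := lt_trans one_pos hc1
    have hja : (j:ℝ) = 2*(x:ℝ) - n - 1 := by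
      have h : (j + n + 1 : ℕ) = 2 * x := by omega
      have h2 := congrArg (Nat.cast : ℕ → ℝ) h
      push_cast at h2
      linarith
    have haj : a ^ j = c := by
      rw [ha, ← hja]
      rw [← Real.rpow_natCast (c ^ ((1:ℝ)/(j:ℝ))) j, ← Real.rpow_mul hc0.le,
        one_div_mul_cancel (by exact_mod_cast hj0), Real.rpow_one]
    have ha0 : 0 < a := by
      rw [ha]; exact Real.rpow_pos_of_pos hc0 _
    have hcast : ((n - x + 1 : ℕ) : ℝ) = (n:ℝ) - x + 1 := by
      push_cast [Nat.cast_sub hxn]; ring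
    have hCC : (n.choose (n-x+1):ℝ) * ((n:ℝ) - x + 1) = (n.choose x:ℝ) * x := by
      have h := congrArg (Nat.cast : ℕ → ℝ) hchoose
      push_cast at h
      rw [← hcast]
      exact_mod_cast h
    have hC'eq : (n.choose (n-x+1):ℝ) = (n.choose x:ℝ) * c := by
      rw [hc, ← mul_div_assoc, eq_div_iff (ne_of_gt hd)]
      exact hCC
    have hrel : f (n-x+1) * t ^ j = f x * a ^ j := by
      rw [hkey, hfx, haj, hC'eq]; ring
    have hfe : f (n-x+1) = f x * (a/t)^j := by
      rw [div_pow, ← mul_div_assoc, eq_div_iff (pow_ne_zero j (ne_of_gt ht0))]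
      exact hrel
    have hfxpos : 0 < f x := by rw [hfx]; positivity
    refine ⟨?_, ?_, ?_⟩
    · intro hlt
      rw [hfe]
      have h1 : 1 < (a/t)^j := one_lt_pow₀ ((one_lt_div ht0).mpr hlt) hj0
      exact (lt_mul_iff_one_lt_right hfxpos).mpr h1
    · intro heq
      rw [hfe, heq, div_self (ne_of_gt ha0), one_pow, mul_one]
    · intro hgt
      rw [hfe]
      have h1 : (a/t)^j < 1 := pow_lt_one₀ (by positivity) ((div_lt_one ht0).mpr hgt) hj0
      exact mul_lt_of_lt_one_right hfxpos h1
end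

section
/- For the Binomial(n, 1/2) pmf, define q(x) = #{y in {0,...,n} : f_{1/2}(x) <= f_{1/2}(y)}. Then q(x) = 1 + |n - 2x| for all x in {0,...,n}. -/
private lemma choose_step {n r : ℕ} (h : 2 * (r + 1) ≤ n) :
    n.choose r < n.choose (r + 1) := by
  have hpos : 0 < n.choose r := Nat.choose_pos (by omega)
  have key : n.choose (r + 1) * (r + 1) = n.choose r * (n - r) :=
    Nat.choose_succ_right_eq n r
  have hlt : n.choose r * (r + 1) < n.choose r * (n - r) := by
    exact mul_lt_mul_of_pos_left (by omega) hpos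
  rw [← key] at hlt
  exact Nat.lt_of_mul_lt_mul_right hlt

private lemma choose_strict {n a b : ℕ} (hab : a < b) (hb : 2 * b ≤ n) :
    n.choose a < n.choose b := by
  induction b with
  | zero => omega
  | succ c ih =>
    rcases Nat.lt_succ_iff_lt_or_eq.mp hab with h | h
    · exact (ih h (by omega)).trans (choose_step hb)
    · subst h; exact choose_step hb

private lemma choose_mono' {n a b : ℕ} (hab : a ≤ b) (hb : 2 * b ≤ n) :
    n.choose a ≤ n.choose b := by
  rcases eq_or_lt_of_le hab with h | h
  · subst h; exact le_refl _
  · exact (choose_strict h hb).le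

private lemma choose_iff {n a y : ℕ} (ha : 2 * a ≤ n) (hy : y ≤ n) :
    n.choose a ≤ n.choose y ↔ a ≤ y ∧ y ≤ n - a := by
  set y' := min y (n - y) with hy'
  have hy2 : 2 * y' ≤ n := by omega
  have hcy : n.choose y' = n.choose y := by
    rcases le_total y (n - y) with h | h
    · simp [hy', min_eq_left h]
    · rw [hy', min_eq_right h, ← Nat.choose_symm hy]
  constructor
  · intro hle
    by_contra hcon
    have hy'a : y' < a := by omega
    have := choose_strict hy'a ha
    omega
  · intro ⟨h1, h2⟩
    have : a ≤ y' := by omega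
    rw [← hcy]
    exact choose_mono' this hy2

/-- For the Binomial(n,1/2) pmf `f(x) = C(n,x)/2^n`, the count
`q(x) = #{y ∈ {0,…,n} : f(x) ≤ f(y)}` equals `1 + |n - 2x|`. -/
theorem stmt14 (n : ℕ) (f : ℕ → ℝ) (hf : ∀ x, f x = (n.choose x : ℝ) / 2 ^ n)
    (x : ℕ) (hx : x ≤ n) :
    ((Finset.range (n + 1)).filter (fun y => f x ≤ f y)).card
      = 1 + ((n : ℤ) - 2 * x).natAbs := by
  set a := min x (n - x) with ha
  have ha2 : 2 * a ≤ n := by omega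
  have hca : n.choose a = n.choose x := by
    rcases le_total x (n - x) with h | h
    · simp [ha, min_eq_left h]
    · rw [ha, min_eq_right h, ← Nat.choose_symm hx]
  have hset : (Finset.range (n + 1)).filter (fun y => f x ≤ f y)
      = Finset.Icc a (n - a) := by
    ext y
    simp only [Finset.mem_filter, Finset.mem_range, Nat.lt_succ_iff, Finset.mem_Icc]
    constructor
    · rintro ⟨hyn, hfle⟩
      have : (n.choose x : ℝ) ≤ (n.choose y : ℝ) := by
        rw [hf, hf] at hfle
        exact (div_le_div_iff_of_pos_right (by positivity)).mp hfle
      have hch : n.choose a ≤ n.choose y := by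
        rw [hca]; exact_mod_cast this
      exact (choose_iff ha2 hyn).mp hch
    · rintro ⟨h1, h2⟩
      have hyn : y ≤ n := by omega
      have hch : n.choose a ≤ n.choose y := (choose_iff ha2 hyn).mpr ⟨h1, h2⟩
      rw [hca] at hch
      refine ⟨hyn, ?_⟩
      rw [hf, hf]
      apply div_le_div_of_nonneg_right ?_ (by positivity)
      exact_mod_cast hch
  rw [hset, Nat.card_Icc]
  omega
end
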